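/- arXiv:0708.3707 — 6 statements merged into one kernel-verified Lean document; each statement's English description precedes it below -/
import Mathlib

section
/- Let Γ = (V,E,∂₋,∂₊,ℓ) be a finite oriented graph with edge lengths ℓ : E → (0,∞), G a vertex space and G^⊥ its dual vertex space. Then the 1-form Laplacians satisfy d_G d*_G + d_{G^⊥} d*_{G^⊥} = 2·[ℓ^{-1}] on ℂ^E, i.e. (d_G d*_G η)_e + (d_{G^⊥} d*_{G^⊥} η)_e = (2/ℓ_e)·η_e for all η ∈ ℂ^E and e ∈ E. In particular, if ℓ_e = 1 for all e, then d_{G^⊥} d*_{G^⊥} = 2·id − d_G d*_G, and a number λ is an eigenvalue of d_{G^⊥} d*_{G^⊥} if and only if 2 − λ is an eigenvalue of d_G d*_G. -/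
open ComplexConjugate

/-- The 1-form Laplacians of a vertex space `G` and of its dual `G^⊥` satisfy
`d_G d*_G + d_{G^⊥} d*_{G^⊥} = 2·[ℓ⁻¹]`; if all lengths are `1` then
`d_{G^⊥} d*_{G^⊥} = 2·id - d_G d*_G` and `λ` is an eigenvalue of `d_{G^⊥} d*_{G^⊥}` iff
`2 - λ` is an eigenvalue of `d_G d*_G`.  Slots indexed by `E × Bool`, `(e, true)`
belonging to `bd true e = ∂₊e` and `(e, false)` to `bd false e = ∂₋e`. -/
theorem one_form_laplacian_dual
    {V E : Type*} [Fintype V] [Fintype E] [DecidableEq V]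
    (bd : Bool → E → V) (ℓ : E → ℝ) (hℓ : ∀ e, 0 < ℓ e)
    (G : V → Submodule ℂ (E → Bool → ℂ))
    (hGsupp : ∀ v, ∀ F ∈ G v, ∀ e b, bd b e ≠ v → F e b = 0)
    (P : V → ((E → Bool → ℂ) →ₗ[ℂ] (E → Bool → ℂ)))
    (hPmem : ∀ v F, P v F ∈ G v)
    (hPid : ∀ v, ∀ F ∈ G v, P v F = F)
    (hPsa : ∀ v F H, ∑ e, ∑ b, conj (P v F e b) * H e b
                   = ∑ e, ∑ b, conj (F e b) * P v H e b)
    (dstarG dstarGperp : (E → ℂ) → (E → Bool → ℂ))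
    (hdstarG : ∀ η, dstarG η
        = ∑ v, P v (fun e b => (ℓ e : ℂ)⁻¹ * (if b then η e else -η e)))
    (hdstarGperp : ∀ η, dstarGperp η
        = ∑ v, ((fun e b => if bd b e = v
                    then (ℓ e : ℂ)⁻¹ * (if b then η e else -η e) else 0)
                 - P v (fun e b => (ℓ e : ℂ)⁻¹ * (if b then η e else -η e)))) :
    (∀ η e, ((dstarG η e true - dstarG η e false)
              + (dstarGperp η e true - dstarGperp η e false))
            = 2 / (ℓ e : ℂ) * η e)
    ∧ ((∀ e, ℓ e = 1) →
        (∀ η e, dstarGperp η e true - dstarGperp η e false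
            = 2 * η e - (dstarG η e true - dstarG η e false))
        ∧ ∀ lam : ℂ,
          ((∃ η : E → ℂ, η ≠ 0 ∧
              ∀ e, dstarGperp η e true - dstarGperp η e false = lam * η e)
            ↔ (∃ η : E → ℂ, η ≠ 0 ∧
              ∀ e, dstarG η e true - dstarG η e false = (2 - lam) * η e))) := by
  have key : ∀ η e b, dstarG η e b + dstarGperp η e b
      = (ℓ e : ℂ)⁻¹ * (if b then η e else -η e) := by
    intro η e b
    rw [hdstarG, hdstarGperp]
    have h1 : (∑ v, P v (fun e b => (ℓ e : ℂ)⁻¹ * (if b then η e else -η e))) e b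
        = ∑ v, P v (fun e b => (ℓ e : ℂ)⁻¹ * (if b then η e else -η e)) e b := by
      simp [Finset.sum_apply]
    have h2 : (∑ v, ((fun e b => if bd b e = v
            then (ℓ e : ℂ)⁻¹ * (if b then η e else -η e) else 0)
          - P v (fun e b => (ℓ e : ℂ)⁻¹ * (if b then η e else -η e)))) e b
        = ∑ v, ((if bd b e = v then (ℓ e : ℂ)⁻¹ * (if b then η e else -η e) else 0)
          - P v (fun e b => (ℓ e : ℂ)⁻¹ * (if b then η e else -η e)) e b) := by
      simp [Finset.sum_apply, Pi.sub_apply]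
    rw [h1, h2, ← Finset.sum_add_distrib]
    simp only [add_sub_cancel]
    rw [Finset.sum_ite_eq (Finset.univ) (bd b e)
      (fun _ => (ℓ e : ℂ)⁻¹ * (if b then η e else -η e))]
    simp
  have main : ∀ η e, ((dstarG η e true - dstarG η e false)
        + (dstarGperp η e true - dstarGperp η e false)) = 2 / (ℓ e : ℂ) * η e := by
    intro η e
    have ht := key η e true
    have hf := key η e false
    norm_num at ht hf
    linear_combination ht - hf
  refine ⟨main, fun h1 => ?_⟩
  have main1 : ∀ η e, dstarGperp η e true - dstarGperp η e false
      = 2 * η e - (dstarG η e true - dstarG η e false) := by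
    intro η e
    have := main η e
    rw [h1 e] at this
    norm_num at this
    linear_combination this
  refine ⟨main1, fun lam => ?_⟩
  constructor
  · rintro ⟨η, hη, heig⟩
    refine ⟨η, hη, fun e => ?_⟩
    have := main1 η e
    rw [heig e] at this
    linear_combination this
  · rintro ⟨η, hη, heig⟩
    refine ⟨η, hη, fun e => ?_⟩
    have := main1 η e
    rw [heig e] at this
    linear_combination this
end

section
/- Let Γ = (V,E,∂₋,∂₊) be a finite oriented graph with all edge lengths ℓ_e = 1, let G be a vertex space with dual vertex space G^⊥, and let λ ∈ ℂ with λ ∉ {0,2}. Then λ is an eigenvalue of the 0-form Laplacian d*_{G^⊥} d_{G^⊥} on G^⊥ if and only if 2 − λ is an eigenvalue of the 0-form Laplacian d*_G d_G on G. -/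
open ComplexConjugate

/-- Spectral relation for 0-form Laplacians of a vertex space `G` and of its dual `G^⊥`
(all edge lengths equal to `1`): for `λ ∉ {0, 2}`, `λ` is an eigenvalue of
`d*_{G^⊥} d_{G^⊥}` on `G^⊥` iff `2 - λ` is an eigenvalue of `d*_G d_G` on `G`.
Slots indexed by `E × Bool`, `(e, true)` belonging to `bd true e = ∂₊e` and
`(e, false)` to `bd false e = ∂₋e`; membership of `F` in the vertex space `G = ⊕_v G_v`
means each vertex cutoff of `F` lies in `G_v`, and membership in `G^⊥` means each vertex
cutoff is annihilated by the orthogonal projection `P_v`. -/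
theorem zero_form_laplacian_dual_spectrum
    {V E : Type*} [Fintype V] [Fintype E] [DecidableEq V]
    (bd : Bool → E → V)
    (G : V → Submodule ℂ (E → Bool → ℂ))
    (hGsupp : ∀ v, ∀ F ∈ G v, ∀ e b, bd b e ≠ v → F e b = 0)
    (P : V → ((E → Bool → ℂ) →ₗ[ℂ] (E → Bool → ℂ)))
    (hPmem : ∀ v F, P v F ∈ G v)
    (hPid : ∀ v, ∀ F ∈ G v, P v F = F)
    (hPsa : ∀ v F H, ∑ e, ∑ b, conj (P v F e b) * H e b
                   = ∑ e, ∑ b, conj (F e b) * P v H e b)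
    (dstarG dstarGperp : (E → ℂ) → (E → Bool → ℂ))
    (hdstarG : ∀ η, dstarG η = ∑ v, P v (fun e b => if b then η e else -η e))
    (hdstarGperp : ∀ η, dstarGperp η
        = ∑ v, ((fun e b => if bd b e = v then (if b then η e else -η e) else 0)
                 - P v (fun e b => if b then η e else -η e)))
    (lam : ℂ) (hlam0 : lam ≠ 0) (hlam2 : lam ≠ 2) :
    (∃ F : E → Bool → ℂ, F ≠ 0
        ∧ (∀ v, P v (fun e b => if bd b e = v then F e b else 0) = 0)
        ∧ dstarGperp (fun e => F e true - F e false) = lam • F)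
    ↔ (∃ F : E → Bool → ℂ, F ≠ 0
        ∧ (∀ v, (fun e b => if bd b e = v then F e b else 0) ∈ G v)
        ∧ dstarG (fun e => F e true - F e false) = (2 - lam) • F) := by
  classical
  -- Key fact: `P v` kills anything vanishing on the slots of `v`.
  have keyA : ∀ (v : V) (X : E → Bool → ℂ),
      (∀ e b, bd b e = v → X e b = 0) → P v X = 0 := by
    intro v X hX
    have h1 := hPsa v X (P v X)
    rw [hPid v (P v X) (hPmem v X)] at h1
    have h2 : ∑ e, ∑ b, conj (X e b) * P v X e b = 0 := by
      refine Finset.sum_eq_zero fun e _ => Finset.sum_eq_zero fun b _ => ?_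
      by_cases h : bd b e = v
      · rw [hX e b h]; simp
      · rw [hGsupp v (P v X) (hPmem v X) e b h, mul_zero]
    have h1' : ∑ e, ∑ b, conj (P v X e b) * P v X e b = 0 := h1.trans h2
    have h1'' : ∑ e, ∑ b, ((Complex.normSq (P v X e b) : ℂ)) = 0 := by
      rw [← h1']
      exact Finset.sum_congr rfl fun e _ => Finset.sum_congr rfl fun b _ => by
        rw [mul_comm, Complex.mul_conj]
    have h3 : ∑ e, ∑ b, Complex.normSq (P v X e b) = 0 := by exact_mod_cast h1''
    funext e b
    have h5 : ∀ e ∈ (Finset.univ : Finset E),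
        (0:ℝ) ≤ ∑ b, Complex.normSq (P v X e b) :=
      fun e _ => Finset.sum_nonneg fun b _ => Complex.normSq_nonneg _
    have h6 := (Finset.sum_eq_zero_iff_of_nonneg h5).mp h3 e (Finset.mem_univ e)
    have h7 := (Finset.sum_eq_zero_iff_of_nonneg
      fun b _ => Complex.normSq_nonneg _).mp h6 b (Finset.mem_univ b)
    simpa using Complex.normSq_eq_zero.mp h7
  -- `P v (cutoff v Y) = P v Y`
  have keyB : ∀ (v : V) (Y : E → Bool → ℂ),
      P v (fun e b => if bd b e = v then Y e b else 0) = P v Y := by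
    intro v Y
    have h0 : P v (Y - fun e b => if bd b e = v then Y e b else 0) = 0 := by
      refine keyA v _ fun e b hb => ?_
      simp [hb]
    rw [map_sub] at h0
    exact (sub_eq_zero.mp h0).symm
  -- the dual divergence, rewritten
  have hio : ∀ μ : E → ℂ, dstarGperp μ
      = (fun (e : E) (b : Bool) => if b then μ e else -μ e)
        - ∑ v, P v (fun e b => if b then μ e else -μ e) := by
    intro μ
    rw [hdstarGperp μ]
    funext e b
    simp only [Finset.sum_apply, Pi.sub_apply]
    rw [Finset.sum_sub_distrib]
    congr 1
    simp
  -- scaling lemmas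
  have hiof : ∀ (c : ℂ) (μ₁ μ₂ : E → ℂ), (∀ e, μ₁ e = c * μ₂ e) →
      (fun (e : E) (b : Bool) => if b then μ₁ e else -μ₁ e)
        = c • fun (e : E) (b : Bool) => if b then μ₂ e else -μ₂ e := by
    intro c μ₁ μ₂ h
    funext e b
    cases b <;> simp [h e] <;> ring
  have hGsm : ∀ (c : ℂ) (μ₁ μ₂ : E → ℂ), (∀ e, μ₁ e = c * μ₂ e) →
      dstarG μ₁ = c • dstarG μ₂ := by
    intro c μ₁ μ₂ h
    rw [hdstarG, hdstarG, hiof c μ₁ μ₂ h, Finset.smul_sum]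
    exact Finset.sum_congr rfl fun v _ => map_smul (P v) c _
  have hPsm : ∀ (c : ℂ) (μ₁ μ₂ : E → ℂ), (∀ e, μ₁ e = c * μ₂ e) →
      dstarGperp μ₁ = c • dstarGperp μ₂ := by
    intro c μ₁ μ₂ h
    rw [hio μ₁, hio μ₂, hiof c μ₁ μ₂ h, smul_sub, Finset.smul_sum]
    congr 1
    exact Finset.sum_congr rfl fun v _ => map_smul (P v) c _
  constructor
  · rintro ⟨F, hF0, -, hFeq⟩
    set η : E → ℂ := fun e => F e true - F e false with hη
    rw [hio η] at hFeq
    set X : E → Bool → ℂ := fun e b => if b then η e else -η e with hX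
    have hF' : ∑ v, P v X = X - lam • F := by rw [← hFeq]; abel
    refine ⟨X - lam • F, ?_, ?_, ?_⟩
    · intro h0
      apply hF0
      funext e b
      have ht := congrFun (congrFun h0 e) true
      have hf := congrFun (congrFun h0 e) false
      simp only [hX, hη, Pi.sub_apply, Pi.smul_apply, smul_eq_mul, Pi.zero_apply,
        reduceIte, Bool.false_eq_true, ite_false, ite_true] at ht hf
      have h1 : lam * (F e true + F e false) = 0 := by linear_combination -ht - hf
      have h1' : F e true + F e false = 0 := by
        rcases mul_eq_zero.mp h1 with h | h
        · exact absurd h hlam0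
        · exact h
      have h2 : (2 - lam) * F e true = 0 := by linear_combination ht + h1'
      have h2' : F e true = 0 := by
        rcases mul_eq_zero.mp h2 with h | h
        · exact absurd h (sub_ne_zero.mpr fun hc => hlam2 hc.symm)
        · exact h
      have h3 : F e false = 0 := by linear_combination h1' - h2'
      cases b
      · simpa using h3
      · simpa using h2'
    · intro v
      have hcut : (fun e b => if bd b e = v then (X - lam • F) e b else 0) = P v X := by
        funext e b
        by_cases h : bd b e = v
        · rw [if_pos h, ← hF']
          simp only [Finset.sum_apply]
          exact Finset.sum_eq_single_of_mem v (Finset.mem_univ v)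
            fun w _ hw => hGsupp w _ (hPmem w X) e b fun he => hw (he.symm.trans h)
        · rw [if_neg h]
          exact (hGsupp v _ (hPmem v X) e b h).symm
      rw [hcut]
      exact hPmem v X
    · have harg : (fun e => (X - lam • F) e true - (X - lam • F) e false)
          = fun e => (2 - lam) * η e := by
        funext e
        simp only [hX, hη, Pi.sub_apply, Pi.smul_apply, smul_eq_mul]
        simp only [reduceIte, Bool.false_eq_true, ite_false, ite_true]
        ring
      rw [harg, hGsm (2 - lam) (fun e => (2 - lam) * η e) η (fun e => rfl),
        hdstarG η, ← hX, hF']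
  · rintro ⟨F, hF0, -, hFeq⟩
    set η : E → ℂ := fun e => F e true - F e false with hη
    rw [hdstarG η] at hFeq
    set X : E → Bool → ℂ := fun e b => if b then η e else -η e with hX
    -- hFeq : ∑ v, P v X = (2 - lam) • F
    refine ⟨X - (2 - lam) • F, ?_, ?_, ?_⟩
    · intro h0
      apply hF0
      funext e b
      have ht := congrFun (congrFun h0 e) true
      have hf := congrFun (congrFun h0 e) false
      simp only [hX, hη, Pi.sub_apply, Pi.smul_apply, smul_eq_mul, Pi.zero_apply,
        reduceIte, Bool.false_eq_true, ite_false, ite_true] at ht hf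
      have h1 : (2 - lam) * (F e true + F e false) = 0 := by linear_combination -ht - hf
      have h1' : F e true + F e false = 0 := by
        rcases mul_eq_zero.mp h1 with h | h
        · exact absurd h (sub_ne_zero.mpr fun hc => hlam2 hc.symm)
        · exact h
      have h2 : lam * F e true = 0 := by linear_combination ht + h1'
      have h2' : F e true = 0 := by
        rcases mul_eq_zero.mp h2 with h | h
        · exact absurd h hlam0
        · exact h
      have h3 : F e false = 0 := by linear_combination h1' - h2'
      cases b
      · simpa using h3
      · simpa using h2'
    · intro v
      have hPoff : ∀ w, w ≠ v → P v (P w X) = 0 := fun w hw =>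
        keyA v (P w X) fun e b hb =>
          hGsupp w _ (hPmem w X) e b fun he => hw (he.symm.trans hb)
      rw [keyB v (X - (2 - lam) • F), ← hFeq, map_sub, map_sum,
        Finset.sum_eq_single_of_mem v (Finset.mem_univ v) (fun w _ hw => hPoff w hw),
        hPid v (P v X) (hPmem v X), sub_self]
    · have harg : (fun e => (X - (2 - lam) • F) e true - (X - (2 - lam) • F) e false)
          = fun e => lam * η e := by
        funext e
        simp only [hX, hη, Pi.sub_apply, Pi.smul_apply, smul_eq_mul]
        simp only [reduceIte, Bool.false_eq_true, ite_false, ite_true]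
        ring
      rw [harg, hPsm lam (fun e => lam * η e) η (fun e => rfl),
        hio η, ← hX, hFeq]
end

section
/- (Discrete Gauß–Bonnet theorem for general vertex spaces.) Let Γ = (V,E,∂₋,∂₊,ℓ) be a finite oriented graph and G = ⊕_v G_v a vertex space. Define the curvature at v ∈ V by κ_G(v) := dim G_v − (deg v)/2 ∈ ℚ. Then the Euler characteristic χ_G(Γ) := dim ker d_G − dim ker d*_G satisfies χ_G(Γ) = Σ_{v∈V} κ_G(v). -/
open ComplexConjugate

/-- Discrete Gauß–Bonnet theorem for general vertex spaces:
`χ_G(Γ) = dim ker d_G - dim ker d*_G = ∑_v κ_G(v)` with the curvature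
`κ_G(v) = dim G_v - (deg v)/2`.  Slots indexed by `E × Bool`, `(e, true)` belonging to
`bd true e = ∂₊e` and `(e, false)` to `bd false e = ∂₋e`, so that
`deg v = #{(e,b) : bd b e = v}`. -/
theorem discrete_gauss_bonnet
    {V E : Type*} [Fintype V] [Fintype E] [DecidableEq V]
    (bd : Bool → E → V) (ℓ : E → ℝ) (hℓ : ∀ e, 0 < ℓ e)
    (G : V → Submodule ℂ (E → Bool → ℂ))
    (hGsupp : ∀ v, ∀ F ∈ G v, ∀ e b, bd b e ≠ v → F e b = 0)
    (Gtot : Submodule ℂ (E → Bool → ℂ))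
    (hGtot : ∀ F, F ∈ Gtot ↔ ∀ v, (fun e b => if bd b e = v then F e b else 0) ∈ G v)
    (dG : (E → Bool → ℂ) →ₗ[ℂ] (E → ℂ))
    (hdG : ∀ F e, dG F e = F e true - F e false)
    (dstar : (E → ℂ) →ₗ[ℂ] (E → Bool → ℂ))
    (hmem : ∀ η, dstar η ∈ Gtot)
    (hadj : ∀ F ∈ Gtot, ∀ η, ∑ e, conj (dG F e) * η e / (ℓ e : ℂ)
              = ∑ e, ∑ b, conj (F e b) * dstar η e b) :
    (Module.finrank ℂ (LinearMap.ker (dG ∘ₗ Gtot.subtype)) : ℚ)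
        - (Module.finrank ℂ (LinearMap.ker dstar) : ℚ)
      = ∑ v, ((Module.finrank ℂ (G v) : ℚ)
          - ((Finset.univ.filter fun p : E × Bool => bd p.2 p.1 = v).card : ℚ) / 2) := by
  classical
  -- Step 1: `finrank Gtot = ∑ v, finrank (G v)` via the restriction equivalence.
  have hGtotrank : Module.finrank ℂ Gtot = ∑ v, Module.finrank ℂ (G v) := by
    let Φ : Gtot →ₗ[ℂ] (∀ v, G v) :=
      { toFun := fun F v => ⟨fun e b => if bd b e = v then F.1 e b else 0,
          (hGtot F.1).1 F.2 v⟩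
        map_add' := by
          intro F₁ F₂; funext v; ext e b
          simp only [Submodule.coe_add, Pi.add_apply]
          split <;> simp
        map_smul' := by
          intro c F; funext v; ext e b
          simp only [Submodule.coe_smul, Pi.smul_apply, RingHom.id_apply, smul_eq_mul]
          split <;> simp }
    have hinj : Function.Injective Φ := by
      intro F₁ F₂ h
      ext e b
      have h1 : (Φ F₁ (bd b e)).1 e b = (Φ F₂ (bd b e)).1 e b := by rw [h]
      simpa [Φ] using h1
    have hsurj : Function.Surjective Φ := by
      intro g
      refine ⟨⟨fun e b => (g (bd b e)).1 e b, ?_⟩, ?_⟩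
      · rw [hGtot]
        intro v
        have : (fun e b => if bd b e = v then (g (bd b e)).1 e b else 0) = (g v).1 := by
          funext e b
          by_cases h : bd b e = v
          · subst h; simp
          · simp [h, hGsupp v _ (g v).2 e b h]
        rw [this]; exact (g v).2
      · funext v; ext e b
        show (if bd b e = v then (g (bd b e)).1 e b else 0) = (g v).1 e b
        by_cases h : bd b e = v
        · subst h; simp
        · simp [h, hGsupp v _ (g v).2 e b h]
    have e1 : Module.finrank ℂ Gtot = Module.finrank ℂ (∀ v, G v) :=
      (LinearEquiv.ofBijective Φ ⟨hinj, hsurj⟩).finrank_eq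
    rw [e1, Module.finrank_pi_fintype]
  -- Step 2: counting slots: `∑ v, deg v = 2 * |E|`.
  have hdeg : ∑ v, (Finset.univ.filter fun p : E × Bool => bd p.2 p.1 = v).card
      = 2 * Fintype.card E := by
    have := Finset.card_eq_sum_card_fiberwise
      (f := fun p : E × Bool => bd p.2 p.1) (s := Finset.univ) (t := Finset.univ)
      (fun x _ => Finset.mem_univ _)
    rw [← this]
    simp [Finset.card_univ, Fintype.card_prod, mul_comm]
  -- Step 3: orthogonality. Work in `EuclideanSpace ℂ E`.
  set d : Gtot →ₗ[ℂ] (E → ℂ) := dG ∘ₗ Gtot.subtype with hd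
  let ε : EuclideanSpace ℂ E ≃ₗ[ℂ] (E → ℂ) := WithLp.linearEquiv 2 ℂ (E → ℂ)
  -- the weighted rescaling `η ↦ η / ℓ`, as a linear equivalence into Euclidean space
  let Tdiv : (E → ℂ) →ₗ[ℂ] (E → ℂ) :=
    { toFun := fun η e => η e / (ℓ e : ℂ)
      map_add' := by intro a b; funext e; simp [add_div]
      map_smul' := by intro c a; funext e; simp [mul_div_assoc] }
  let Tmul : (E → ℂ) →ₗ[ℂ] (E → ℂ) :=
    { toFun := fun η e => η e * (ℓ e : ℂ)
      map_add' := by intro a b; funext e; simp [add_mul]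
      map_smul' := by intro c a; funext e; simp [mul_assoc] }
  have hℓ0 : ∀ e, (ℓ e : ℂ) ≠ 0 := fun e => by exact_mod_cast (hℓ e).ne'
  let T : (E → ℂ) ≃ₗ[ℂ] EuclideanSpace ℂ E :=
    LinearEquiv.ofLinear
      (ε.symm.toLinearMap ∘ₗ Tdiv)
      (Tmul ∘ₗ ε.toLinearMap)
      (by
        apply LinearMap.ext; intro η; ext e
        show WithLp.ofLp η e * (ℓ e : ℂ) / (ℓ e : ℂ) = WithLp.ofLp η e
        exact mul_div_cancel_right₀ _ (hℓ0 e))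
      (by
        apply LinearMap.ext; intro η; funext e
        show η e / (ℓ e : ℂ) * (ℓ e : ℂ) = η e
        exact div_mul_cancel₀ _ (hℓ0 e))
  let L : Gtot →ₗ[ℂ] EuclideanSpace ℂ E := ε.symm.toLinearMap ∘ₗ d
  set K : Submodule ℂ (EuclideanSpace ℂ E) := LinearMap.range L with hK
  -- `ker dstar` corresponds to `Kᗮ` under `T`
  have hker : LinearMap.ker dstar = Submodule.comap T.toLinearMap Kᗮ := by
    ext η
    simp only [LinearMap.mem_ker, Submodule.mem_comap]
    rw [Submodule.mem_orthogonal]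
    constructor
    · intro h0 u hu
      obtain ⟨F, rfl⟩ := hu
      have key := hadj F.1 F.2 η
      have : (inner ℂ (L F) (T.toLinearMap η) : ℂ)
          = ∑ e, conj (dG F.1 e) * η e / (ℓ e : ℂ) := by
        rw [PiLp.inner_apply]
        refine Finset.sum_congr rfl fun e _ => ?_
        rw [RCLike.inner_apply]
        show (η e / (ℓ e : ℂ)) * conj ((dG F.1) e) = _
        ring
      rw [this, key, h0]
      simp
    · intro h0
      have key := hadj (dstar η) (hmem η) η
      have hz : ∑ e, ∑ b, conj (dstar η e b) * dstar η e b = 0 := by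
        rw [← key]
        have := h0 (L ⟨dstar η, hmem η⟩) ⟨⟨dstar η, hmem η⟩, rfl⟩
        rw [PiLp.inner_apply] at this
        rw [← this]
        refine Finset.sum_congr rfl fun e _ => ?_
        rw [RCLike.inner_apply]
        show conj ((dG (dstar η)) e) * η e / (ℓ e : ℂ)
          = (η e / (ℓ e : ℂ)) * conj ((dG (dstar η)) e)
        ring
      have hzR : ∑ e, ∑ b, Complex.normSq (dstar η e b) = 0 := by
        have : ((∑ e, ∑ b, Complex.normSq (dstar η e b) : ℝ) : ℂ) = 0 := by
          push_cast
          rw [← hz]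
          refine Finset.sum_congr rfl fun e _ => Finset.sum_congr rfl fun b _ => ?_
          rw [← Complex.normSq_eq_conj_mul_self]
        exact_mod_cast this
      funext e b
      have he : ∑ b, Complex.normSq (dstar η e b) = 0 := by
        have := (Finset.sum_eq_zero_iff_of_nonneg
          (fun e _ => Finset.sum_nonneg fun b _ => Complex.normSq_nonneg _)).1 hzR e
          (Finset.mem_univ _)
        exact this
      have := (Finset.sum_eq_zero_iff_of_nonneg
        (fun b _ => Complex.normSq_nonneg _)).1 he b (Finset.mem_univ _)
      exact Complex.normSq_eq_zero.1 this
  -- dimension bookkeeping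
  have hkerstar : Module.finrank ℂ (LinearMap.ker dstar) = Module.finrank ℂ Kᗮ := by
    rw [hker, Submodule.comap_equiv_eq_map_symm, LinearEquiv.finrank_map_eq]
  have hKrank : Module.finrank ℂ K = Module.finrank ℂ (LinearMap.range d) := by
    have : K = Submodule.map ε.symm.toLinearMap (LinearMap.range d) := by
      rw [hK]
      exact (LinearMap.range_comp _ _)
    rw [this]
    exact LinearEquiv.finrank_map_eq ε.symm _
  have hperp : Module.finrank ℂ K + Module.finrank ℂ Kᗮ
      = Fintype.card E := by
    rw [Submodule.finrank_add_finrank_orthogonal K, finrank_euclideanSpace]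
  have hrn : Module.finrank ℂ (LinearMap.range d) + Module.finrank ℂ (LinearMap.ker d)
      = Module.finrank ℂ Gtot := LinearMap.finrank_range_add_finrank_ker d
  -- final arithmetic over ℚ
  rw [Finset.sum_sub_distrib, ← Finset.sum_div]
  rw [hkerstar]
  have c1 : ((∑ v, Module.finrank ℂ (G v) : ℕ) : ℚ) = ∑ v, (Module.finrank ℂ (G v) : ℚ) := by
    push_cast; ring
  have c2 : ((∑ v, (Finset.univ.filter fun p : E × Bool => bd p.2 p.1 = v).card : ℕ) : ℚ)
      = ∑ v, ((Finset.univ.filter fun p : E × Bool => bd p.2 p.1 = v).card : ℚ) := by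
    push_cast; ring
  rw [← c1, ← c2, ← hGtotrank, hdeg]
  have q1 : (Module.finrank ℂ K : ℚ) + Module.finrank ℂ Kᗮ = Fintype.card E := by
    exact_mod_cast congrArg (Nat.cast : ℕ → ℚ) hperp
  have q2 : (Module.finrank ℂ (LinearMap.range d) : ℚ) + Module.finrank ℂ (LinearMap.ker d)
      = Module.finrank ℂ Gtot := by
    exact_mod_cast congrArg (Nat.cast : ℕ → ℚ) hrn
  have q3 : (Module.finrank ℂ K : ℚ) = Module.finrank ℂ (LinearMap.range d) := by
    exact_mod_cast congrArg (Nat.cast : ℕ → ℚ) hKrank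
  push_cast
  linarith
end

section
/- Let Γ = (V,E,∂₋,∂₊,ℓ) be a finite oriented graph, G a vertex space with dual vertex space G^⊥, and τG the oriented version of G, where τ : G^max → G^max is the orientation involution (τF)_e(v) = F_e(v) if v = ∂₊e and (τF)_e(v) = −F_e(v) if v = ∂₋e. Then the map ψ : ℂ^E → G^⊥ defined by (ψη)(v) = P_v^⊥({η_e/ℓ_e}_{(e,±)∈E_v}) restricts to a linear isomorphism from ker d*_{τG} onto ker d_{G^⊥}. In particular dim ker d_{G^⊥} = dim ker d*_{τG}, dim ker d*_{G^⊥} = dim ker d_{τG}, and the indices satisfy ind D_{G^⊥} = −ind D_{τG}. -/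
open ComplexConjugate

set_option maxHeartbeats 1000000 in
set_option synthInstance.maxHeartbeats 1000000 in
theorem key_duality
    {V E : Type*} [Fintype V] [Fintype E] [DecidableEq V]
    (bd : Bool → E → V) (ℓ : E → ℝ) (hℓ : ∀ e, 0 < ℓ e)
    (G : V → Submodule ℂ (E → Bool → ℂ))
    (hGsupp : ∀ v, ∀ F ∈ G v, ∀ e b, bd b e ≠ v → F e b = 0)
    (P : V → ((E → Bool → ℂ) →ₗ[ℂ] (E → Bool → ℂ)))
    (hPmem : ∀ v F, P v F ∈ G v)
    (hPid : ∀ v, ∀ F ∈ G v, P v F = F)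
    (hPsa : ∀ v F H, ∑ e, ∑ b, conj (P v F e b) * H e b
                   = ∑ e, ∑ b, conj (F e b) * P v H e b)
    (τ : (E → Bool → ℂ) →ₗ[ℂ] (E → Bool → ℂ))
    (hτ : ∀ F e b, τ F e b = if b then F e b else -F e b)
    (GtotPerp : Submodule ℂ (E → Bool → ℂ))
    (hGtotPerp : ∀ F, F ∈ GtotPerp
        ↔ ∀ v, P v (fun e b => if bd b e = v then F e b else 0) = 0)
    (GtotTau : Submodule ℂ (E → Bool → ℂ))
    (hGtotTau : ∀ F, F ∈ GtotTau
        ↔ ∀ v, (fun e b => if bd b e = v then F e b else 0) ∈ Submodule.map τ (G v))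
    (dG : (E → Bool → ℂ) →ₗ[ℂ] (E → ℂ))
    (hdG : ∀ F e, dG F e = F e true - F e false)
    (dstarTau : (E → ℂ) →ₗ[ℂ] (E → Bool → ℂ))
    (hmemTau : ∀ η, dstarTau η ∈ GtotTau)
    (hadjTau : ∀ F ∈ GtotTau, ∀ η, ∑ e, conj (dG F e) * η e / (ℓ e : ℂ)
              = ∑ e, ∑ b, conj (F e b) * dstarTau η e b)
    (ψ : (E → ℂ) →ₗ[ℂ] (E → Bool → ℂ))
    (hψ : ∀ η, ψ η = (fun e b => (ℓ e : ℂ)⁻¹ * η e)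
        - ∑ v, P v (fun e b => (ℓ e : ℂ)⁻¹ * η e)) :
    (∀ η, dstarTau η = 0 → ψ η ∈ GtotPerp ∧ dG (ψ η) = 0)
    ∧ (∀ η, dstarTau η = 0 → ψ η = 0 → η = 0)
    ∧ (∀ F ∈ GtotPerp, dG F = 0 → ∃ η, dstarTau η = 0 ∧ ψ η = F)
    ∧ Module.finrank ℂ (LinearMap.ker (dG ∘ₗ GtotPerp.subtype))
        = Module.finrank ℂ (LinearMap.ker dstarTau) := by
  -- positive definiteness of the standard hermitian form
  have posdef : ∀ F : E → Bool → ℂ, (∑ e, ∑ b, conj (F e b) * F e b) = 0 → F = 0 := by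
    intro F h
    have h2 : ∑ e, ∑ b, ((‖F e b‖ : ℂ) ^ 2) = 0 := by
      rw [← h]; symm
      exact Finset.sum_congr rfl fun e _ =>
        Finset.sum_congr rfl fun b _ => Complex.conj_mul' (F e b)
    have h3 : ∑ e, ∑ b, ‖F e b‖ ^ 2 = 0 := by exact_mod_cast h2
    funext e b
    have h4 : ∀ p ∈ Finset.univ (α := E), (0:ℝ) ≤ ∑ b, ‖F p b‖ ^ 2 :=
      fun p _ => Finset.sum_nonneg fun b _ => sq_nonneg _
    have h5 := (Finset.sum_eq_zero_iff_of_nonneg h4).mp h3 e (Finset.mem_univ e)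
    have h6 := (Finset.sum_eq_zero_iff_of_nonneg
      (fun b _ => sq_nonneg ‖F e b‖)).mp h5 b (Finset.mem_univ b)
    simpa using h6
  -- P v kills functions vanishing on the slots of v
  have Pkill : ∀ v (F : E → Bool → ℂ), (∀ e b, bd b e = v → F e b = 0) → P v F = 0 := by
    intro v F hF
    have h1 := hPsa v F (P v F)
    rw [hPid v _ (hPmem v F)] at h1
    apply posdef
    rw [h1]
    refine Finset.sum_eq_zero fun e _ => Finset.sum_eq_zero fun b _ => ?_
    by_cases hb : bd b e = v
    · rw [hF e b hb]; simp
    · rw [hGsupp v _ (hPmem v F) e b hb, mul_zero]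
  have Prestrict : ∀ v (F : E → Bool → ℂ),
      P v F = P v (fun e b => if bd b e = v then F e b else 0) := by
    intro v F
    have h := Pkill v (F - fun e b => if bd b e = v then F e b else 0)
      (by intro e b hb; simp [hb])
    rw [map_sub, sub_eq_zero] at h
    exact h
  have memPerp_iff : ∀ F, F ∈ GtotPerp ↔ ∀ v, P v F = 0 := by
    intro F
    rw [hGtotPerp]
    exact forall_congr' fun v => by rw [← Prestrict]
  have tautau : ∀ F, τ (τ F) = F := by
    intro F; funext e b; rw [hτ, hτ]; cases b <;> simp
  have hℓne : ∀ e, (ℓ e : ℂ) ≠ 0 := fun e =>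
    Complex.ofReal_ne_zero.mpr (ne_of_gt (hℓ e))
  -- the key inner-product identity
  have keyinner : ∀ (F : E → Bool → ℂ) (η : E → ℂ),
      ∑ e, conj (dG F e) * η e / (ℓ e : ℂ)
      = ∑ e, ∑ b, conj (τ F e b) * ((ℓ e : ℂ)⁻¹ * η e) := by
    intro F η
    refine Finset.sum_congr rfl fun e _ => ?_
    rw [Fintype.sum_bool, hdG, hτ, hτ]
    simp only [reduceIte, map_sub, map_neg, Bool.false_eq_true, if_false, if_true]
    field_simp
    ring
  have sumswap : ∀ (H : V → (E → Bool → ℂ)) (F : E → Bool → ℂ),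
      ∑ e, ∑ b, conj ((∑ v, H v) e b) * F e b
      = ∑ v, ∑ e, ∑ b, conj (H v e b) * F e b := by
    intro H F
    simp only [Finset.sum_apply, map_sum, Finset.sum_mul]
    rw [show (∑ e, ∑ b, ∑ v, conj (H v e b) * F e b)
        = ∑ e, ∑ v, ∑ b, conj (H v e b) * F e b from
      Finset.sum_congr rfl fun e _ => Finset.sum_comm]
    exact Finset.sum_comm
  have sumR : ∀ F : E → Bool → ℂ,
      (∑ v, fun e b => if bd b e = v then F e b else 0) = F := by
    intro F; funext e b
    simp only [Finset.sum_apply]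
    simp
  have tauR : ∀ v (K : E → Bool → ℂ),
      (fun e b => if bd b e = v then τ K e b else 0)
      = τ (fun e b => if bd b e = v then K e b else 0) := by
    intro v K; funext e b
    rw [hτ, hτ]
    cases b <;> simp only [Bool.false_eq_true, if_false, if_true] <;> split_ifs <;> simp
  -- a GtotTau element is reproduced by the projections after applying τ
  have Ptot : ∀ K ∈ GtotTau, (∑ v, P v (τ K)) = τ K := by
    intro K hK
    have hv : ∀ v, P v (τ K) = (fun e b => if bd b e = v then τ K e b else 0) := by
      intro v
      obtain ⟨g, hg, hgeq⟩ := (hGtotTau K).mp hK v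
      have hR : (fun e b => if bd b e = v then τ K e b else 0) = g := by
        rw [tauR v K, ← hgeq, tautau]
      calc P v (τ K) = P v (fun e b => if bd b e = v then τ K e b else 0) :=
            Prestrict _ _
        _ = P v g := by rw [hR]
        _ = g := hPid v g hg
        _ = _ := hR.symm
    rw [Finset.sum_congr rfl fun v _ => hv v, sumR]
  have orthTauPerp : ∀ K ∈ GtotTau, ∀ F ∈ GtotPerp,
      ∑ e, ∑ b, conj (τ K e b) * F e b = 0 := by
    intro K hK F hF
    have h1 : ∑ e, ∑ b, conj (τ K e b) * F e b
        = ∑ e, ∑ b, conj ((∑ v, P v (τ K)) e b) * F e b := by rw [Ptot K hK]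
    rw [h1, sumswap]
    refine Finset.sum_eq_zero fun v _ => ?_
    rw [hPsa v (τ K) F, (memPerp_iff F).1 hF v]
    simp
  -- the support of a projection
  have Psupp : ∀ v (F : E → Bool → ℂ) e b, bd b e ≠ v → P v F e b = 0 :=
    fun v F => hGsupp v _ (hPmem v F)
  -- if dstarTau η = 0 then all projections of η̃ vanish
  have etaP0 : ∀ η : E → ℂ, dstarTau η = 0 →
      ∀ v, P v (fun e b => (ℓ e : ℂ)⁻¹ * η e) = 0 := by
    intro η h0 v
    set N : E → Bool → ℂ := fun e b => (ℓ e : ℂ)⁻¹ * η e with hNdef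
    have hNb : ∀ e (b : Bool), N e b = (ℓ e : ℂ)⁻¹ * η e := fun e b => by rw [hNdef]
    have hτgmem : τ (P v N) ∈ GtotTau := by
      rw [hGtotTau]
      intro u
      by_cases huv : u = v
      · subst huv
        have hRg : (fun e b => if bd b e = u then τ (P u N) e b else 0)
            = τ (P u N) := by
          funext e b
          by_cases hbe : bd b e = u
          · simp [hbe]
          · rw [if_neg hbe, hτ]
            cases b
            · rw [Psupp u N e false hbe]; simp
            · rw [Psupp u N e true hbe]; simp
        rw [hRg]
        exact ⟨P u N, hPmem u N, rfl⟩
      · have hRg : (fun e b => if bd b e = u then τ (P v N) e b else 0)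
            = (0 : E → Bool → ℂ) := by
          funext e b
          by_cases hbe : bd b e = u
          · rw [if_pos hbe, hτ]
            have hne : bd b e ≠ v := by rw [hbe]; exact huv
            cases b
            · rw [Psupp v N e false hne]; simp
            · rw [Psupp v N e true hne]; simp
          · rw [if_neg hbe]; rfl
        rw [hRg]
        exact Submodule.zero_mem _
    have hadj := hadjTau (τ (P v N)) hτgmem η
    rw [h0] at hadj
    simp only [Pi.zero_apply, mul_zero, Finset.sum_const_zero] at hadj
    have k := keyinner (τ (P v N)) η
    rw [tautau] at k
    have h1 : ∑ e, ∑ b, conj (P v N e b) * ((ℓ e : ℂ)⁻¹ * η e) = 0 :=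
      k.symm.trans hadj
    have h1' : ∑ e, ∑ b, conj (P v N e b) * N e b = 0 :=
      (Finset.sum_congr rfl fun e _ => Finset.sum_congr rfl fun b _ => by
        rw [hNb e b]).trans h1
    have h4 := hPsa v N N
    rw [h1'] at h4
    have h3 := hPsa v N (P v N)
    rw [hPid v _ (hPmem v N)] at h3
    exact posdef _ (h3.trans h4.symm)
  -- part 1
  have part1 : ∀ η, dstarTau η = 0 → ψ η ∈ GtotPerp ∧ dG (ψ η) = 0 := by
    intro η h0
    have hP := etaP0 η h0
    have hψη : ψ η = fun e b => (ℓ e : ℂ)⁻¹ * η e := by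
      rw [hψ, Finset.sum_congr rfl fun v _ => hP v]
      simp
    refine ⟨(memPerp_iff _).2 fun v => by rw [hψη]; exact hP v, ?_⟩
    funext e
    rw [hdG, hψη]
    simp
  -- part 2
  have part2 : ∀ η, dstarTau η = 0 → ψ η = 0 → η = 0 := by
    intro η h0 hz
    have hP := etaP0 η h0
    have hψη : ψ η = fun e b => (ℓ e : ℂ)⁻¹ * η e := by
      rw [hψ, Finset.sum_congr rfl fun v _ => hP v]
      simp
    rw [hψη] at hz
    funext e
    have := congrFun (congrFun hz e) true
    simp only [Pi.zero_apply] at this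
    rcases mul_eq_zero.mp this with h | h
    · exact absurd h (inv_ne_zero (hℓne e))
    · exact h
  -- part 3
  have part3 : ∀ F ∈ GtotPerp, dG F = 0 → ∃ η, dstarTau η = 0 ∧ ψ η = F := by
    intro F hF hdF
    have hde : ∀ e, F e true - F e false = 0 := fun e => by
      have := congrFun hdF e; rwa [hdG] at this
    set η' : E → ℂ := fun e => (ℓ e : ℂ) * F e true with hη'
    have hN : (fun e b => (ℓ e : ℂ)⁻¹ * η' e) = F := by
      funext e b
      simp only [hη']
      rw [inv_mul_cancel_left₀ (hℓne e)]
      cases b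
      · linear_combination hde e
      · rfl
    have hNb : ∀ e (b : Bool), (ℓ e : ℂ)⁻¹ * η' e = F e b := fun e b => by
      rw [← hN]
    refine ⟨η', ?_, ?_⟩
    · apply posdef
      have hadj := hadjTau (dstarTau η') (hmemTau η') η'
      have k := keyinner (dstarTau η') η'
      calc ∑ e, ∑ b, conj (dstarTau η' e b) * dstarTau η' e b
          = ∑ e, conj (dG (dstarTau η') e) * η' e / (ℓ e : ℂ) := hadj.symm
        _ = ∑ e, ∑ b, conj (τ (dstarTau η') e b) * ((ℓ e : ℂ)⁻¹ * η' e) := k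
        _ = ∑ e, ∑ b, conj (τ (dstarTau η') e b) * F e b :=
            Finset.sum_congr rfl fun e _ => Finset.sum_congr rfl fun b _ => by
              rw [hNb e b]
        _ = 0 := orthTauPerp _ (hmemTau η') F hF
    · have hsum : (∑ v, P v F) = 0 :=
        Finset.sum_eq_zero fun v _ => (memPerp_iff F).1 hF v
      rw [hψ, hN, hsum, sub_zero]
  refine ⟨part1, part2, part3, ?_⟩
  -- the linear equivalence between the kernels
  have hker : ∀ η : LinearMap.ker dstarTau, dstarTau (η : E → ℂ) = 0 :=
    fun η => η.2
  let ψ'' : LinearMap.ker dstarTau →ₗ[ℂ] GtotPerp :=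
    LinearMap.codRestrict GtotPerp (ψ ∘ₗ (LinearMap.ker dstarTau).subtype)
      (fun η => (part1 _ (hker η)).1)
  let f : LinearMap.ker dstarTau →ₗ[ℂ] LinearMap.ker (dG ∘ₗ GtotPerp.subtype) :=
    LinearMap.codRestrict _ ψ''
      (fun η => LinearMap.mem_ker.mpr (by
        have : dG (ψ (η : E → ℂ)) = 0 := (part1 _ (hker η)).2
        exact this))
  have hinj : Function.Injective f := by
    intro a b hab
    have h1 : ψ (a : E → ℂ) = ψ (b : E → ℂ) :=
      congrArg (fun x : LinearMap.ker (dG ∘ₗ GtotPerp.subtype) =>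
        ((x : GtotPerp) : E → Bool → ℂ)) hab
    have h0 : dstarTau ((a : E → ℂ) - (b : E → ℂ)) = 0 := by
      rw [map_sub, hker a, hker b, sub_self]
    have h2 : ψ ((a : E → ℂ) - (b : E → ℂ)) = 0 := by
      rw [map_sub, h1, sub_self]
    exact Subtype.ext (sub_eq_zero.mp (part2 _ h0 h2))
  have hsurj : Function.Surjective f := by
    rintro ⟨⟨F, hF⟩, h0⟩
    have hdF : dG F = 0 := LinearMap.mem_ker.mp h0
    obtain ⟨η, hη0, hηF⟩ := part3 F hF hdF
    exact ⟨⟨η, LinearMap.mem_ker.mpr hη0⟩, Subtype.ext (Subtype.ext hηF)⟩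
  exact (LinearEquiv.ofBijective f ⟨hinj, hsurj⟩).finrank_eq.symm

set_option maxHeartbeats 1000000 in
set_option synthInstance.maxHeartbeats 1000000 in
/-- Duality between the dual vertex space `G^⊥` and the oriented version `τG`:
the map `(ψη)(v) = P_v^⊥({η_e/ℓ_e})` restricts to a linear isomorphism
`ker d*_{τG} ≅ ker d_{G^⊥}`; consequently `dim ker d_{G^⊥} = dim ker d*_{τG}`,
`dim ker d*_{G^⊥} = dim ker d_{τG}` and `ind D_{G^⊥} = -ind D_{τG}`.
Slots indexed by `E × Bool`, `(e, true)` belonging to `bd true e = ∂₊e` and `(e, false)`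
to `bd false e = ∂₋e`; `τ` negates the values at the slots `(e, false)`. -/
theorem dual_oriented_kernel_isomorphism
    {V E : Type*} [Fintype V] [Fintype E] [DecidableEq V]
    (bd : Bool → E → V) (ℓ : E → ℝ) (hℓ : ∀ e, 0 < ℓ e)
    -- the vertex space `G = ⊕_v G_v` with orthogonal projections `P_v`
    (G : V → Submodule ℂ (E → Bool → ℂ))
    (hGsupp : ∀ v, ∀ F ∈ G v, ∀ e b, bd b e ≠ v → F e b = 0)
    (P : V → ((E → Bool → ℂ) →ₗ[ℂ] (E → Bool → ℂ)))
    (hPmem : ∀ v F, P v F ∈ G v)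
    (hPid : ∀ v, ∀ F ∈ G v, P v F = F)
    (hPsa : ∀ v F H, ∑ e, ∑ b, conj (P v F e b) * H e b
                   = ∑ e, ∑ b, conj (F e b) * P v H e b)
    -- the orientation involution `τ`
    (τ : (E → Bool → ℂ) →ₗ[ℂ] (E → Bool → ℂ))
    (hτ : ∀ F e b, τ F e b = if b then F e b else -F e b)
    -- the total space of the dual vertex space `G^⊥`
    (GtotPerp : Submodule ℂ (E → Bool → ℂ))
    (hGtotPerp : ∀ F, F ∈ GtotPerp
        ↔ ∀ v, P v (fun e b => if bd b e = v then F e b else 0) = 0)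
    -- the total space of the oriented vertex space `τG`
    (GtotTau : Submodule ℂ (E → Bool → ℂ))
    (hGtotTau : ∀ F, F ∈ GtotTau
        ↔ ∀ v, (fun e b => if bd b e = v then F e b else 0) ∈ Submodule.map τ (G v))
    -- the exterior derivative
    (dG : (E → Bool → ℂ) →ₗ[ℂ] (E → ℂ))
    (hdG : ∀ F e, dG F e = F e true - F e false)
    -- the adjoint of `d` on `τG`
    (dstarTau : (E → ℂ) →ₗ[ℂ] (E → Bool → ℂ))
    (hmemTau : ∀ η, dstarTau η ∈ GtotTau)
    (hadjTau : ∀ F ∈ GtotTau, ∀ η, ∑ e, conj (dG F e) * η e / (ℓ e : ℂ)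
              = ∑ e, ∑ b, conj (F e b) * dstarTau η e b)
    -- the adjoint of `d` on `G^⊥`
    (dstarPerp : (E → ℂ) →ₗ[ℂ] (E → Bool → ℂ))
    (hmemPerp : ∀ η, dstarPerp η ∈ GtotPerp)
    (hadjPerp : ∀ F ∈ GtotPerp, ∀ η, ∑ e, conj (dG F e) * η e / (ℓ e : ℂ)
              = ∑ e, ∑ b, conj (F e b) * dstarPerp η e b)
    -- the comparison map `ψ`
    (ψ : (E → ℂ) →ₗ[ℂ] (E → Bool → ℂ))
    (hψ : ∀ η, ψ η = (fun e b => (ℓ e : ℂ)⁻¹ * η e)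
        - ∑ v, P v (fun e b => (ℓ e : ℂ)⁻¹ * η e)) :
    (∀ η, dstarTau η = 0 → ψ η ∈ GtotPerp ∧ dG (ψ η) = 0)
    ∧ (∀ η, dstarTau η = 0 → ψ η = 0 → η = 0)
    ∧ (∀ F ∈ GtotPerp, dG F = 0 → ∃ η, dstarTau η = 0 ∧ ψ η = F)
    ∧ Module.finrank ℂ (LinearMap.ker (dG ∘ₗ GtotPerp.subtype))
        = Module.finrank ℂ (LinearMap.ker dstarTau)
    ∧ Module.finrank ℂ (LinearMap.ker dstarPerp)
        = Module.finrank ℂ (LinearMap.ker (dG ∘ₗ GtotTau.subtype))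
    ∧ (Module.finrank ℂ (LinearMap.ker (dG ∘ₗ GtotPerp.subtype)) : ℤ)
        - (Module.finrank ℂ (LinearMap.ker dstarPerp) : ℤ)
      = -((Module.finrank ℂ (LinearMap.ker (dG ∘ₗ GtotTau.subtype)) : ℤ)
        - (Module.finrank ℂ (LinearMap.ker dstarTau) : ℤ)) := by
  obtain ⟨p1, p2, p3, p4⟩ := key_duality bd ℓ hℓ G hGsupp P hPmem hPid hPsa τ hτ
    GtotPerp hGtotPerp GtotTau hGtotTau dG hdG dstarTau hmemTau hadjTau ψ hψ
  -- small auxiliary facts (as in `key_duality`)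
  have posdef : ∀ F : E → Bool → ℂ, (∑ e, ∑ b, conj (F e b) * F e b) = 0 → F = 0 := by
    intro F h
    have h2 : ∑ e, ∑ b, ((‖F e b‖ : ℂ) ^ 2) = 0 := by
      rw [← h]; symm
      exact Finset.sum_congr rfl fun e _ =>
        Finset.sum_congr rfl fun b _ => Complex.conj_mul' (F e b)
    have h3 : ∑ e, ∑ b, ‖F e b‖ ^ 2 = 0 := by exact_mod_cast h2
    funext e b
    have h4 : ∀ p ∈ Finset.univ (α := E), (0:ℝ) ≤ ∑ b, ‖F p b‖ ^ 2 :=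
      fun p _ => Finset.sum_nonneg fun b _ => sq_nonneg _
    have h5 := (Finset.sum_eq_zero_iff_of_nonneg h4).mp h3 e (Finset.mem_univ e)
    have h6 := (Finset.sum_eq_zero_iff_of_nonneg
      (fun b _ => sq_nonneg ‖F e b‖)).mp h5 b (Finset.mem_univ b)
    simpa using h6
  have Pkill : ∀ v (F : E → Bool → ℂ), (∀ e b, bd b e = v → F e b = 0) → P v F = 0 := by
    intro v F hF
    have h1 := hPsa v F (P v F)
    rw [hPid v _ (hPmem v F)] at h1
    apply posdef
    rw [h1]
    refine Finset.sum_eq_zero fun e _ => Finset.sum_eq_zero fun b _ => ?_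
    by_cases hb : bd b e = v
    · rw [hF e b hb]; simp
    · rw [hGsupp v _ (hPmem v F) e b hb, mul_zero]
  have Prestrict : ∀ v (F : E → Bool → ℂ),
      P v F = P v (fun e b => if bd b e = v then F e b else 0) := by
    intro v F
    have h := Pkill v (F - fun e b => if bd b e = v then F e b else 0)
      (by intro e b hb; simp [hb])
    rw [map_sub, sub_eq_zero] at h
    exact h
  have tautau : ∀ F, τ (τ F) = F := by
    intro F; funext e b; rw [hτ, hτ]; cases b <;> simp
  have tauR : ∀ v (K : E → Bool → ℂ),
      (fun e b => if bd b e = v then τ K e b else 0)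
      = τ (fun e b => if bd b e = v then K e b else 0) := by
    intro v K; funext e b
    rw [hτ, hτ]
    cases b <;> simp only [Bool.false_eq_true, if_false, if_true] <;> split_ifs <;> simp
  have tausa : ∀ (F K : E → Bool → ℂ),
      ∑ e, ∑ b, conj (τ F e b) * K e b = ∑ e, ∑ b, conj (F e b) * τ K e b := by
    intro F K
    refine Finset.sum_congr rfl fun e _ => Finset.sum_congr rfl fun b _ => ?_
    rw [hτ, hτ]
    cases b <;> simp <;> ring
  have Psupp : ∀ v (F : E → Bool → ℂ) e b, bd b e ≠ v → P v F e b = 0 :=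
    fun v F => hGsupp v _ (hPmem v F)
  -- the restriction maps
  let Rlin : V → ((E → Bool → ℂ) →ₗ[ℂ] (E → Bool → ℂ)) := fun v =>
    { toFun := fun F e b => if bd b e = v then F e b else 0
      map_add' := by intro F K; funext e b; by_cases hbe : bd b e = v <;>
        simp [hbe, Pi.add_apply]
      map_smul' := by intro c F; funext e b; by_cases hbe : bd b e = v <;>
        simp [hbe, Pi.smul_apply] }
  have hRlin : ∀ v (F : E → Bool → ℂ),
      Rlin v F = fun e b => if bd b e = v then F e b else 0 := fun v F => rfl
  -- the orthogonal complement of `G v` inside the slots at `v`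
  let Gp : V → Submodule ℂ (E → Bool → ℂ) := fun v =>
    { carrier := {F | P v F = 0 ∧ ∀ e b, bd b e ≠ v → F e b = 0}
      add_mem' := by
        rintro F K ⟨hF1, hF2⟩ ⟨hK1, hK2⟩
        exact ⟨by rw [map_add, hF1, hK1, add_zero],
          fun e b hbe => by simp [Pi.add_apply, hF2 e b hbe, hK2 e b hbe]⟩
      zero_mem' := ⟨map_zero _, fun _ _ _ => rfl⟩
      smul_mem' := by
        rintro c F ⟨h1, h2⟩
        exact ⟨by rw [map_smul, h1, smul_zero],
          fun e b hbe => by simp [Pi.smul_apply, h2 e b hbe]⟩ }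
  have hGp : ∀ v (F : E → Bool → ℂ), F ∈ Gp v
      ↔ (P v F = 0 ∧ ∀ e b, bd b e ≠ v → F e b = 0) := fun v F => Iff.rfl
  let Hsp : V → Submodule ℂ (E → Bool → ℂ) := fun v => Submodule.map τ (Gp v)
  let P' : V → ((E → Bool → ℂ) →ₗ[ℂ] (E → Bool → ℂ)) := fun v =>
    Rlin v - τ ∘ₗ P v ∘ₗ τ
  have hP' : ∀ v (F : E → Bool → ℂ),
      P' v F = (fun e b => if bd b e = v then F e b else 0) - τ (P v (τ F)) :=
    fun v F => rfl
  -- support property for Hsp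
  have hHsupp : ∀ v, ∀ F ∈ Hsp v, ∀ e b, bd b e ≠ v → F e b = 0 := by
    rintro v F ⟨g, ⟨hg1, hg2⟩, hgτ⟩ e b hbe
    rw [← hgτ, hτ]
    cases b
    · rw [hg2 e false hbe]; simp
    · rw [hg2 e true hbe]; simp
  -- P' v maps into Hsp v
  have hP'mem : ∀ v F, P' v F ∈ Hsp v := by
    intro v F
    refine ⟨(fun e b => if bd b e = v then τ F e b else 0) - P v (τ F), ⟨?_, ?_⟩, ?_⟩
    · rw [map_sub, ← Prestrict v (τ F), hPid v _ (hPmem v (τ F)), sub_self]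
    · intro e b hbe
      simp only [Pi.sub_apply, if_neg hbe, Psupp v (τ F) e b hbe, sub_zero]
    · rw [map_sub, ← tauR v (τ F), hP']
      congr 1
      funext e b
      by_cases hbe : bd b e = v
      · simp [hbe, tautau]
      · simp [hbe]
  -- P' v is the identity on Hsp v
  have hP'id : ∀ v, ∀ F ∈ Hsp v, P' v F = F := by
    rintro v F ⟨g, ⟨hg1, hg2⟩, hgτ⟩
    have h1 : τ F = g := by rw [← hgτ, tautau]
    rw [hP', h1, hg1, map_zero, sub_zero]
    funext e b
    by_cases hbe : bd b e = v
    · simp [hbe]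
    · rw [if_neg hbe, ← hgτ, hτ]
      cases b
      · rw [hg2 e false hbe]; simp
      · rw [hg2 e true hbe]; simp
  -- self-adjointness of P'
  have hP'sa : ∀ v F K, ∑ e, ∑ b, conj (P' v F e b) * K e b
      = ∑ e, ∑ b, conj (F e b) * P' v K e b := by
    intro v F K
    have Rsa : ∑ e, ∑ b, conj (if bd b e = v then F e b else 0) * K e b
        = ∑ e, ∑ b, conj (F e b) * (if bd b e = v then K e b else 0) := by
      refine Finset.sum_congr rfl fun e _ => Finset.sum_congr rfl fun b _ => ?_
      by_cases hbe : bd b e = v <;> simp [hbe]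
    have Bsa : ∑ e, ∑ b, conj (τ (P v (τ F)) e b) * K e b
        = ∑ e, ∑ b, conj (F e b) * τ (P v (τ K)) e b :=
      (tausa (P v (τ F)) K).trans ((hPsa v (τ F) (τ K)).trans (tausa F (P v (τ K))))
    calc ∑ e, ∑ b, conj (P' v F e b) * K e b
        = ∑ e, ∑ b, (conj (if bd b e = v then F e b else 0) * K e b
            - conj (τ (P v (τ F)) e b) * K e b) := by
          simp only [hP', Pi.sub_apply, map_sub, sub_mul]
      _ = ∑ e, ∑ b, conj (if bd b e = v then F e b else 0) * K e b
            - ∑ e, ∑ b, conj (τ (P v (τ F)) e b) * K e b := by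
          simp only [Finset.sum_sub_distrib]
      _ = ∑ e, ∑ b, conj (F e b) * (if bd b e = v then K e b else 0)
            - ∑ e, ∑ b, conj (F e b) * τ (P v (τ K)) e b := by rw [Rsa, Bsa]
      _ = ∑ e, ∑ b, (conj (F e b) * (if bd b e = v then K e b else 0)
            - conj (F e b) * τ (P v (τ K)) e b) := by
          simp only [Finset.sum_sub_distrib]
      _ = ∑ e, ∑ b, conj (F e b) * P' v K e b := by
          simp only [hP', Pi.sub_apply, mul_sub]
  -- GtotTau is the "GtotPerp" of Hsp
  have hHperp : ∀ F, F ∈ GtotTau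
      ↔ ∀ v, P' v (fun e b => if bd b e = v then F e b else 0) = 0 := by
    intro F
    rw [hGtotTau]
    refine forall_congr' fun v => ?_
    have h2 : τ (fun e b => if bd b e = v then F e b else 0)
        = fun e b => if bd b e = v then τ F e b else 0 := (tauR v F).symm
    have hcalc : P' v (fun e b => if bd b e = v then F e b else 0)
        = (fun e b => if bd b e = v then F e b else 0) - τ (P v (τ F)) := by
      rw [hP', h2, ← Prestrict v (τ F)]
      congr 1
      funext e b
      by_cases hbe : bd b e = v <;> simp [hbe]
    rw [hcalc, sub_eq_zero]
    constructor
    · rintro ⟨g, hg, hgeq⟩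
      have h3 : (fun e b => if bd b e = v then τ F e b else 0) = g := by
        rw [tauR v F, ← hgeq, tautau]
      have h4 : P v (τ F) = g := by
        rw [Prestrict v (τ F), h3]; exact hPid v g hg
      rw [h4, ← hgeq]
    · intro hEq
      exact ⟨P v (τ F), hPmem v (τ F), hEq.symm⟩
  -- GtotPerp is the "GtotTau" of Hsp
  have hHtau : ∀ F, F ∈ GtotPerp
      ↔ ∀ v, (fun e b => if bd b e = v then F e b else 0)
        ∈ Submodule.map τ (Hsp v) := by
    intro F
    rw [hGtotPerp]
    refine forall_congr' fun v => ?_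
    have hmapmap : Submodule.map τ (Hsp v) = Gp v := by
      show Submodule.map τ (Submodule.map τ (Gp v)) = Gp v
      rw [← Submodule.map_comp]
      have hid : τ ∘ₗ τ = LinearMap.id := LinearMap.ext tautau
      rw [hid, Submodule.map_id]
    rw [hmapmap, hGp]
    constructor
    · intro h
      exact ⟨h, fun e b hbe => if_neg hbe⟩
    · rintro ⟨h1, _⟩
      exact h1
  -- the comparison map for the swapped data
  let base : (E → ℂ) →ₗ[ℂ] (E → Bool → ℂ) :=
    { toFun := fun η e b => (ℓ e : ℂ)⁻¹ * η e
      map_add' := by intro a b; funext e bb; simp [Pi.add_apply]; ring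
      map_smul' := by intro c a; funext e bb; simp [Pi.smul_apply]; ring }
  let ψ' : (E → ℂ) →ₗ[ℂ] (E → Bool → ℂ) := base - ∑ v, (P' v) ∘ₗ base
  have hψ' : ∀ η, ψ' η = (fun e b => (ℓ e : ℂ)⁻¹ * η e)
      - ∑ v, P' v (fun e b => (ℓ e : ℂ)⁻¹ * η e) := by
    intro η
    show base η - (∑ v, (P' v) ∘ₗ base) η = _
    rw [LinearMap.sum_apply]
    rfl
  obtain ⟨_, _, _, p5⟩ := key_duality bd ℓ hℓ Hsp hHsupp P' hP'mem hP'id hP'sa τ hτ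
    GtotTau hHperp GtotPerp hHtau dG hdG dstarPerp hmemPerp hadjPerp ψ' hψ'
  exact ⟨p1, p2, p3, p4, p5.symm, by omega⟩
end

section
/- Let Γ be a finite connected simple graph (no loops or multiple edges) that is d-regular with d ≥ 2 and has at least one edge, and let L(Γ) be its line graph: the vertices of L(Γ) are the edges of Γ, and two distinct edges e, e' of Γ are adjacent in L(Γ) iff they share an endpoint; L(Γ) is (2d−2)-regular. Let Δ_Γ and Δ_{L(Γ)} denote the standard (degree-normalized) Laplacians, (Δ_Γ F)(v) = F(v) − (1/d)Σ_{w∼v} F(w) and (Δ_{L(Γ)} G)(e) = G(e) − (1/(2d−2))Σ_{e'∼e} G(e'). Then the eigenvalue sets satisfy spec(Δ_{L(Γ)}) \ {d/(d−1)} = (d/(2(d−1)))·(spec(Δ_Γ) \ {2}), i.e. λ ≠ d/(d−1) is an eigenvalue of Δ_{L(Γ)} if and only if λ = (d/(2(d−1)))·μ for some eigenvalue μ ≠ 2 of Δ_Γ. -/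
open Finset

namespace LGAux

variable {V : Type*} [Fintype V] [DecidableEq V]
variable (Γ : SimpleGraph V) [DecidableRel Γ.Adj]

noncomputable def M (F : V → ℂ) (e : Γ.edgeSet) : ℂ :=
  ∑ u : V, if u ∈ (e : Sym2 V) then F u else 0

noncomputable def N (G : Γ.edgeSet → ℂ) (v : V) : ℂ :=
  ∑ e : Γ.edgeSet, if v ∈ (e : Sym2 V) then G e else 0

lemma card_inc (v : V) :
    (univ.filter (fun e : Γ.edgeSet => v ∈ (e : Sym2 V))).card = Γ.degree v := by
  classical
  rw [← Fintype.card_subtype]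
  rw [← SimpleGraph.card_neighborSet_eq_degree]
  refine Fintype.card_congr ?_
  refine ((Equiv.subtypeSubtypeEquivSubtypeInter (· ∈ Γ.edgeSet) (v ∈ ·)).trans ?_).trans
    (Γ.incidenceSetEquivNeighborSet v)
  exact Equiv.subtypeEquivRight fun z => by
    simp [SimpleGraph.incidenceSet, and_comm]

lemma sum_inc_const (v : V) (c : ℂ) :
    (∑ e : Γ.edgeSet, if v ∈ (e : Sym2 V) then c else 0) = (Γ.degree v : ℂ) * c := by
  classical
  rw [← Finset.sum_filter, Finset.sum_const, card_inc, nsmul_eq_mul]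

/-- sum over vertices of an edge -/
lemma sum_mem_edge_const (e : Γ.edgeSet) (c : ℂ) :
    (∑ u : V, if u ∈ (e : Sym2 V) then c else 0) = 2 * c := by
  classical
  obtain ⟨z, hz⟩ := e
  induction z using Sym2.ind with
  | _ a b =>
    have hab : a ≠ b := (Γ.mem_edgeSet.mp hz).ne
    rw [← Finset.sum_filter]
    have : (univ.filter (fun u => u ∈ (s(a, b) : Sym2 V))) = {a, b} := by
      ext u; simp [Sym2.mem_iff]
    rw [this, Finset.sum_const, Finset.card_pair hab]
    simp [two_mul, two_smul]

lemma sum_eq_edge (v u : V) (hvu : v ≠ u) (c : ℂ) :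
    (∑ e : Γ.edgeSet, if v ∈ (e : Sym2 V) ∧ u ∈ (e : Sym2 V) then c else 0)
      = if Γ.Adj v u then c else 0 := by
  classical
  by_cases h : Γ.Adj v u
  · rw [if_pos h]
    refine Finset.sum_eq_single_of_mem ⟨s(v, u), Γ.mem_edgeSet.mpr h⟩ (mem_univ _) ?_ |>.trans ?_
    · rintro ⟨z, hz⟩ - hne
      rw [if_neg]
      rw [Sym2.mem_and_mem_iff hvu]
      intro hzz
      exact hne (Subtype.ext hzz)
    · simp
  · rw [if_neg h]
    refine Finset.sum_eq_zero fun e _ => ?_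
    rw [if_neg]
    rw [Sym2.mem_and_mem_iff hvu]
    intro hzz
    exact h (Γ.mem_edgeSet.mp (hzz ▸ e.2))

lemma NM_eq (F : V → ℂ) (v : V) :
    N Γ (M Γ F) v = (Γ.degree v : ℂ) * F v + ∑ w ∈ Γ.neighborFinset v, F w := by
  classical
  unfold N M
  have step : ∀ e : Γ.edgeSet,
      (if v ∈ (e : Sym2 V) then ∑ u : V, if u ∈ (e : Sym2 V) then F u else 0 else 0)
        = ∑ u : V, if v ∈ (e : Sym2 V) ∧ u ∈ (e : Sym2 V) then F u else 0 := by
    intro e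
    by_cases h : v ∈ (e : Sym2 V) <;> simp [h]
  rw [Finset.sum_congr rfl (fun e _ => step e), Finset.sum_comm]
  have step2 : ∀ u : V,
      (∑ e : Γ.edgeSet, if v ∈ (e : Sym2 V) ∧ u ∈ (e : Sym2 V) then F u else 0)
        = (if u = v then (Γ.degree v : ℂ) * F v else 0)
          + (if Γ.Adj v u then F u else 0) := by
    intro u
    by_cases h : u = v
    · subst h
      simp only [and_self, if_pos rfl, Γ.irrefl, if_neg, add_zero]
      rw [sum_inc_const]
      simp [Γ.irrefl]
    · rw [sum_eq_edge Γ v u (Ne.symm h), if_neg h, zero_add]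
  rw [Finset.sum_congr rfl (fun u _ => step2 u), Finset.sum_add_distrib,
    Finset.sum_ite_eq' univ v, if_pos (mem_univ v),
    SimpleGraph.neighborFinset_eq_filter, Finset.sum_filter]

lemma card_shared (e e' : Γ.edgeSet) (hne : e' ≠ e) :
    (∑ u : V, if u ∈ (e : Sym2 V) ∧ u ∈ (e' : Sym2 V) then (1 : ℂ) else 0)
      = if ∃ v, v ∈ (e' : Sym2 V) ∧ v ∈ (e : Sym2 V) then 1 else 0 := by
  classical
  rw [← Finset.sum_filter, Finset.sum_const, nsmul_eq_mul, mul_one]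
  have hsub : (univ.filter (fun u => u ∈ (e : Sym2 V) ∧ u ∈ (e' : Sym2 V))).card ≤ 1 := by
    rw [Finset.card_le_one]
    intro a ha b hb
    simp only [mem_filter] at ha hb
    by_contra hab
    have h1 : (e : Sym2 V) = s(a, b) := (Sym2.mem_and_mem_iff hab).mp ⟨ha.2.1, hb.2.1⟩
    have h2 : (e' : Sym2 V) = s(a, b) := (Sym2.mem_and_mem_iff hab).mp ⟨ha.2.2, hb.2.2⟩
    exact hne (Subtype.ext (h2.trans h1.symm))
  by_cases hex : ∃ v, v ∈ (e' : Sym2 V) ∧ v ∈ (e : Sym2 V)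
  · rw [if_pos hex]
    obtain ⟨w, hw1, hw2⟩ := hex
    have hmem : w ∈ univ.filter (fun u => u ∈ (e : Sym2 V) ∧ u ∈ (e' : Sym2 V)) := by
      simp [hw1, hw2]
    have h1 : 1 ≤ (univ.filter (fun u => u ∈ (e : Sym2 V) ∧ u ∈ (e' : Sym2 V))).card :=
      Finset.card_pos.mpr ⟨w, hmem⟩
    have h2 := le_antisymm hsub h1
    rw [h2]
    norm_num
  · rw [if_neg hex]
    have : (univ.filter (fun u => u ∈ (e : Sym2 V) ∧ u ∈ (e' : Sym2 V))) = ∅ := by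
      rw [Finset.filter_eq_empty_iff]
      intro u _
      rintro ⟨h1, h2⟩
      exact hex ⟨u, h2, h1⟩
    rw [this]
    norm_num

lemma MN_eq (G : Γ.edgeSet → ℂ) (e : Γ.edgeSet) :
    M Γ (N Γ G) e = 2 * G e + ∑ e' : Γ.edgeSet,
      (if e' ≠ e ∧ ∃ v, v ∈ (e' : Sym2 V) ∧ v ∈ (e : Sym2 V) then G e' else 0) := by
  classical
  unfold M N
  have step : ∀ u : V,
      (if u ∈ (e : Sym2 V) then ∑ e' : Γ.edgeSet, if u ∈ (e' : Sym2 V) then G e' else 0 else 0)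
        = ∑ e' : Γ.edgeSet, if u ∈ (e : Sym2 V) ∧ u ∈ (e' : Sym2 V) then G e' else 0 := by
    intro u
    by_cases h : u ∈ (e : Sym2 V) <;> simp [h]
  rw [Finset.sum_congr rfl (fun u _ => step u), Finset.sum_comm]
  have step2 : ∀ e' : Γ.edgeSet,
      (∑ u : V, if u ∈ (e : Sym2 V) ∧ u ∈ (e' : Sym2 V) then G e' else 0)
        = (if e' = e then 2 * G e else 0)
          + (if e' ≠ e ∧ ∃ v, v ∈ (e' : Sym2 V) ∧ v ∈ (e : Sym2 V) then G e' else 0) := by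
    intro e'
    by_cases h : e' = e
    · subst h
      simp only [and_self, if_pos rfl, ne_eq, not_true_eq_false, false_and, if_neg, add_zero,
        not_false_eq_true]
      exact sum_mem_edge_const Γ e' (G e')
    · rw [if_neg h, zero_add]
      have : ∀ u : V, (if u ∈ (e : Sym2 V) ∧ u ∈ ((e' : Γ.edgeSet) : Sym2 V) then G e' else 0)
          = (if u ∈ (e : Sym2 V) ∧ u ∈ ((e' : Γ.edgeSet) : Sym2 V) then (1 : ℂ) else 0) * G e' := by
        intro u; split <;> simp
      rw [Finset.sum_congr rfl (fun u _ => this u), ← Finset.sum_mul,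
        card_shared Γ e e' h]
      by_cases hex : ∃ v, v ∈ (e' : Sym2 V) ∧ v ∈ (e : Sym2 V)
      · rw [if_pos hex, if_pos ⟨h, hex⟩, one_mul]
      · rw [if_neg hex, if_neg (fun hc => hex hc.2), zero_mul]
  rw [Finset.sum_congr rfl (fun e' _ => step2 e'), Finset.sum_add_distrib,
    Finset.sum_ite_eq' univ e, if_pos (mem_univ e)]

lemma M_smul (c : ℂ) (F : V → ℂ) (e : Γ.edgeSet) :
    M Γ (fun v => c * F v) e = c * M Γ F e := by
  unfold M
  rw [Finset.mul_sum]
  exact Finset.sum_congr rfl fun u _ => by split <;> simp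

lemma N_smul (c : ℂ) (G : Γ.edgeSet → ℂ) (v : V) :
    N Γ (fun e => c * G e) v = c * N Γ G v := by
  unfold N
  rw [Finset.mul_sum]
  exact Finset.sum_congr rfl fun u _ => by split <;> simp

lemma M_zero (e : Γ.edgeSet) : M Γ 0 e = 0 := by
  unfold M; simp

lemma N_zero (v : V) : N Γ 0 v = 0 := by
  unfold N; simp

end LGAux


/-- Spectral relation between the degree-normalized Laplacian of a finite connected simple
`d`-regular graph (`d ≥ 2`, at least one edge) and that of its line graph:
`λ ≠ d/(d-1)` is an eigenvalue of `Δ_{L(Γ)}` iff `λ = (d/(2(d-1)))·μ` for some eigenvalue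
`μ ≠ 2` of `Δ_Γ`. -/
theorem line_graph_laplacian_spectrum
    {V : Type*} [Fintype V] [DecidableEq V]
    (Γ : SimpleGraph V) [DecidableRel Γ.Adj]
    (hconn : Γ.Connected)
    (d : ℕ) (hd : 2 ≤ d) (hreg : Γ.IsRegularOfDegree d)
    (hedge : Γ.edgeSet.Nonempty)
    (lam : ℂ) (hlam : lam ≠ (d : ℂ) / ((d : ℂ) - 1)) :
    (∃ G : Γ.edgeSet → ℂ, G ≠ 0 ∧ ∀ e : Γ.edgeSet,
        G e - (1 / (2 * (d : ℂ) - 2)) * ∑ e' : Γ.edgeSet,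
          (if e' ≠ e ∧ ∃ v, v ∈ (e' : Sym2 V) ∧ v ∈ (e : Sym2 V) then G e' else 0)
        = lam * G e)
    ↔ (∃ μ : ℂ, μ ≠ 2
        ∧ (∃ F : V → ℂ, F ≠ 0 ∧ ∀ v,
            F v - (1 / (d : ℂ)) * ∑ w ∈ Γ.neighborFinset v, F w = μ * F v)
        ∧ lam = ((d : ℂ) / (2 * ((d : ℂ) - 1))) * μ) := by
  classical
  have hd0 : (d : ℂ) ≠ 0 := by
    have : d ≠ 0 := by omega
    exact_mod_cast Nat.cast_ne_zero.mpr this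
  have hd1 : (d : ℂ) - 1 ≠ 0 := by
    have : d ≠ 1 := by omega
    intro h
    apply this
    have : (d : ℂ) = 1 := by linear_combination h
    exact_mod_cast this
  have h2d2 : (2 : ℂ) * (d : ℂ) - 2 ≠ 0 := by
    intro h
    apply hd1
    linear_combination (1/2) * h
  constructor
  · rintro ⟨G, hG0, hG⟩
    -- set the eigenvalue of M∘N
    set c : ℂ := 2 + (2 * (d : ℂ) - 2) * (1 - lam) with hc_def
    have hc : c ≠ 0 := by
      intro h
      apply hlam
      rw [eq_div_iff hd1]
      linear_combination (-1/2 : ℂ) * h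
    -- S e in terms of G e
    have hS : ∀ e : Γ.edgeSet,
        (∑ e' : Γ.edgeSet,
          (if e' ≠ e ∧ ∃ v, v ∈ (e' : Sym2 V) ∧ v ∈ (e : Sym2 V) then G e' else 0))
          = (2 * (d : ℂ) - 2) * ((1 - lam) * G e) := by
      intro e
      have h1 := hG e
      have h2 : (1 / (2 * (d : ℂ) - 2)) * (∑ e' : Γ.edgeSet,
          (if e' ≠ e ∧ ∃ v, v ∈ (e' : Sym2 V) ∧ v ∈ (e : Sym2 V) then G e' else 0))
          = (1 - lam) * G e := by linear_combination -h1
      calc (∑ e' : Γ.edgeSet,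
          (if e' ≠ e ∧ ∃ v, v ∈ (e' : Sym2 V) ∧ v ∈ (e : Sym2 V) then G e' else 0))
          = (2 * (d : ℂ) - 2) * ((1 / (2 * (d : ℂ) - 2)) * (∑ e' : Γ.edgeSet,
          (if e' ≠ e ∧ ∃ v, v ∈ (e' : Sym2 V) ∧ v ∈ (e : Sym2 V) then G e' else 0))) := by
            field_simp
        _ = (2 * (d : ℂ) - 2) * ((1 - lam) * G e) := by rw [h2]
    have hMNG : ∀ e, LGAux.M Γ (LGAux.N Γ G) e = c * G e := by
      intro e
      rw [LGAux.MN_eq, hS e, hc_def]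
      ring
    set F : V → ℂ := LGAux.N Γ G with hF_def
    have hMF : LGAux.M Γ F = fun e => c * G e := funext hMNG
    have hNMF : ∀ v, LGAux.N Γ (LGAux.M Γ F) v = c * F v := by
      intro v
      rw [hMF, LGAux.N_smul]
    have hF0 : F ≠ 0 := by
      intro h
      apply hG0
      funext e
      have := hMNG e
      rw [h, LGAux.M_zero] at this
      have := (mul_eq_zero.mp this.symm).resolve_left hc
      simpa using this
    have hNM : ∀ v, (d : ℂ) * F v + ∑ w ∈ Γ.neighborFinset v, F w = c * F v := by
      intro v
      have := hNMF v
      rw [LGAux.NM_eq, hreg v] at this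
      exact this
    refine ⟨(2 * (d : ℂ) - 2) * lam / (d : ℂ), ?_, ⟨F, hF0, ?_⟩, ?_⟩
    · intro h
      apply hlam
      rw [div_eq_iff hd0] at h
      rw [eq_div_iff hd1]
      linear_combination (1/2 : ℂ) * h
    · intro v
      have hsum : (∑ w ∈ Γ.neighborFinset v, F w) = (c - (d : ℂ)) * F v := by
        linear_combination hNM v
      rw [hsum, hc_def]
      field_simp
      ring
    · field_simp
  · rintro ⟨μ, hμ2, ⟨F, hF0, hF⟩, hlameq⟩
    set c : ℂ := (d : ℂ) * (2 - μ) with hc_def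
    have hc : c ≠ 0 := by
      apply mul_ne_zero hd0
      intro h
      apply hμ2
      linear_combination -h
    have hsum : ∀ v, (∑ w ∈ Γ.neighborFinset v, F w) = (d : ℂ) * ((1 - μ) * F v) := by
      intro v
      have h1 := hF v
      have h2 : (1 / (d : ℂ)) * (∑ w ∈ Γ.neighborFinset v, F w) = (1 - μ) * F v := by
        linear_combination -h1
      calc (∑ w ∈ Γ.neighborFinset v, F w)
          = (d : ℂ) * ((1 / (d : ℂ)) * (∑ w ∈ Γ.neighborFinset v, F w)) := by field_simp
        _ = (d : ℂ) * ((1 - μ) * F v) := by rw [h2]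
    have hNMF : ∀ v, LGAux.N Γ (LGAux.M Γ F) v = c * F v := by
      intro v
      rw [LGAux.NM_eq, hreg v, hsum v, hc_def]
      ring
    set G : Γ.edgeSet → ℂ := LGAux.M Γ F with hG_def
    have hG0 : G ≠ 0 := by
      intro h
      apply hF0
      funext v
      have := hNMF v
      rw [h, LGAux.N_zero] at this
      have := (mul_eq_zero.mp this.symm).resolve_left hc
      simpa using this
    have hNG : LGAux.N Γ G = fun v => c * F v := funext hNMF
    have hMNG : ∀ e, LGAux.M Γ (LGAux.N Γ G) e = c * G e := by
      intro e
      rw [hNG, LGAux.M_smul, hG_def]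
    refine ⟨G, hG0, ?_⟩
    intro e
    have hSe : (∑ e' : Γ.edgeSet,
        (if e' ≠ e ∧ ∃ v, v ∈ (e' : Sym2 V) ∧ v ∈ (e : Sym2 V) then G e' else 0))
        = (c - 2) * G e := by
      have := hMNG e
      rw [LGAux.MN_eq] at this
      linear_combination this
    rw [hSe, hlameq, hc_def]
    field_simp
    ring
end

section
/- Let Γ be a finite simple graph (no loops or multiple edges) in which every vertex has degree ≥ 1, and let S(Γ) be its subdivision graph: the vertex set of S(Γ) is V(Γ) ⊔ E(Γ) and its edges are the pairs {v,e} with v an endpoint of e in Γ. Let Δ_Γ and Δ_{S(Γ)} denote the standard (degree-normalized) Laplacians of Γ and S(Γ), and set η(λ) := 2λ(2−λ). Then the eigenvalue sets satisfy spec(Δ_{S(Γ)}) \ {1} = η^{-1}(spec(Δ_Γ) \ {2}), i.e. λ ≠ 1 is an eigenvalue of Δ_{S(Γ)} if and only if η(λ) ≠ 2 and η(λ) is an eigenvalue of Δ_Γ. -/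
section Aux
variable {V : Type*} [Fintype V] [DecidableEq V] (Γ : SimpleGraph V) [DecidableRel Γ.Adj]

lemma subdiv_aux_incFin_eq_image (v : V) :
    Γ.incidenceFinset v = (Γ.neighborFinset v).image (fun w => s(v, w)) := by
  ext e
  induction e
  simp only [SimpleGraph.mem_incidenceFinset, Finset.mem_image,
    SimpleGraph.mem_neighborFinset, SimpleGraph.mk'_mem_incidenceSet_iff]
  constructor
  · rintro ⟨hadj, rfl | rfl⟩
    · exact ⟨_, hadj, rfl⟩
    · exact ⟨_, hadj.symm, Sym2.eq_swap⟩
  · rintro ⟨w, hw, h⟩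
    rw [Sym2.eq_iff] at h
    rcases h with ⟨rfl, rfl⟩ | ⟨rfl, rfl⟩
    · exact ⟨hw, Or.inl rfl⟩
    · exact ⟨hw.symm, Or.inr rfl⟩

lemma subdiv_aux_sum_edge_ite (v : V) (g : Sym2 V → ℂ) :
    ∑ e : Γ.edgeSet, (if v ∈ (e : Sym2 V) then g (e : Sym2 V) else 0)
      = ∑ w ∈ Γ.neighborFinset v, g s(v, w) := by
  rw [Finset.sum_set_coe (f := fun e => if v ∈ e then g e else 0)]
  rw [show Γ.edgeSet.toFinset = Γ.edgeFinset from rfl, ← Finset.sum_filter,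
    show {e ∈ Γ.edgeFinset | v ∈ e} = Γ.incidenceFinset v from
      (Γ.incidenceFinset_eq_filter v).symm,
    subdiv_aux_incFin_eq_image, Finset.sum_image (fun w _ w' _ h => Sym2.congr_right.mp h)]

lemma subdiv_aux_sum_pair (F : V → ℂ) {v w : V} (h : v ≠ w) :
    ∑ u : V, (if u ∈ s(v, w) then F u else 0) = F v + F w := by
  have : ∀ u : V, (if u ∈ s(v, w) then F u else 0)
      = (if u = v then F u else 0) + (if u = w then F u else 0) := by
    intro u
    by_cases h1 : u = v <;> by_cases h2 : u = w <;> simp_all [Sym2.mem_iff]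
  simp only [this, Finset.sum_add_distrib, Finset.sum_ite_eq' Finset.univ,
    Finset.mem_univ, if_true]

end Aux


/-- Spectral relation between the degree-normalized Laplacian of a finite simple graph `Γ`
(all degrees positive) and that of its subdivision graph `S(Γ)` (vertex set `V ⊕ E(Γ)`,
edges `{v, e}` for `v` an endpoint of `e`): with `η(λ) = 2λ(2-λ)`, a number `λ ≠ 1` is an
eigenvalue of `Δ_{S(Γ)}` iff `η(λ) ≠ 2` and `η(λ)` is an eigenvalue of `Δ_Γ`. -/
theorem subdivision_graph_laplacian_spectrum
    {V : Type*} [Fintype V] [DecidableEq V]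
    (Γ : SimpleGraph V) [DecidableRel Γ.Adj]
    (hdeg : ∀ v, 0 < Γ.degree v)
    (lam : ℂ) (hlam : lam ≠ 1) :
    (∃ H : (V ⊕ Γ.edgeSet) → ℂ, H ≠ 0
      ∧ (∀ v : V, H (Sum.inl v) - (1 / (Γ.degree v : ℂ)) *
            ∑ e : Γ.edgeSet, (if v ∈ (e : Sym2 V) then H (Sum.inr e) else 0)
          = lam * H (Sum.inl v))
      ∧ (∀ e : Γ.edgeSet, H (Sum.inr e) - (1 / 2) *
            ∑ v : V, (if v ∈ (e : Sym2 V) then H (Sum.inl v) else 0)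
          = lam * H (Sum.inr e)))
    ↔ (2 * lam * (2 - lam) ≠ 2
        ∧ ∃ F : V → ℂ, F ≠ 0 ∧ ∀ v,
            F v - (1 / (Γ.degree v : ℂ)) * ∑ w ∈ Γ.neighborFinset v, F w
              = (2 * lam * (2 - lam)) * F v) := by
  have h1 : (1 : ℂ) - lam ≠ 0 := sub_ne_zero.mpr (Ne.symm hlam)
  have hd : ∀ v, (Γ.degree v : ℂ) ≠ 0 := fun v => Nat.cast_ne_zero.mpr (hdeg v).ne'
  constructor
  · rintro ⟨H, hH0, hv, he⟩
    have hedge : ∀ e : Γ.edgeSet, H (Sum.inr e)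
        = (∑ u : V, if u ∈ (e : Sym2 V) then H (Sum.inl u) else 0) / (2 * (1 - lam)) := by
      intro e
      have h := he e
      field_simp
      linear_combination (2 : ℂ) * h
    refine ⟨?_, fun w => H (Sum.inl w), ?_, ?_⟩
    · intro hmu
      exact hlam (sub_eq_zero.mp ((pow_eq_zero_iff two_ne_zero).mp
        (show (lam - 1) ^ 2 = 0 by linear_combination (-(1:ℂ)/2) * hmu)))
    · intro hF0
      apply hH0
      funext x
      cases x with
      | inl w => exact congrFun hF0 w
      | inr e =>
        have h := hedge e
        have hz : ∀ u : V, H (Sum.inl u) = 0 := fun u => congrFun hF0 u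
        simp [hz] at h
        exact h
    · intro v
      have hv' := hv v
      have hrw : ∀ e : Γ.edgeSet, (if v ∈ (e : Sym2 V) then H (Sum.inr e) else 0)
          = if v ∈ (e : Sym2 V) then
              (fun s => (∑ u : V, if u ∈ s then H (Sum.inl u) else 0) / (2 * (1 - lam)))
                (e : Sym2 V) else 0 := by
        intro e
        by_cases hve : v ∈ (e : Sym2 V)
        · rw [if_pos hve, hedge e, if_pos hve]
        · rw [if_neg hve, if_neg hve]
      have hS : (∑ e : Γ.edgeSet, if v ∈ (e : Sym2 V) then H (Sum.inr e) else 0)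
          = ((Γ.degree v : ℂ) * H (Sum.inl v)
              + ∑ w ∈ Γ.neighborFinset v, H (Sum.inl w)) / (2 * (1 - lam)) := by
        rw [Finset.sum_congr rfl (fun e _ => hrw e)]
        rw [subdiv_aux_sum_edge_ite Γ v
          (fun s => (∑ u : V, if u ∈ s then H (Sum.inl u) else 0) / (2 * (1 - lam)))]
        rw [← Finset.sum_div]
        congr 1
        rw [Finset.sum_congr rfl (fun w hw => subdiv_aux_sum_pair (fun u => H (Sum.inl u))
          (Γ.ne_of_adj ((by simpa using hw : Γ.Adj v w))))]
        rw [Finset.sum_add_distrib, Finset.sum_const, SimpleGraph.card_neighborFinset_eq_degree,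
          nsmul_eq_mul]
      rw [hS] at hv'
      field_simp [hd v] at hv'
      have hNval : (∑ w ∈ Γ.neighborFinset v, H (Sum.inl w))
          = 2 * (1 - lam) ^ 2 * (Γ.degree v : ℂ) * H (Sum.inl v)
            - (Γ.degree v : ℂ) * H (Sum.inl v) := by linear_combination -hv'
      rw [hNval]
      field_simp [hd v]
      ring
  · rintro ⟨hmu, F, hF0, hF⟩
    refine ⟨Sum.elim F (fun e => (∑ u : V, if u ∈ (e : Sym2 V) then F u else 0) / (2 * (1 - lam))),
      ?_, ?_, ?_⟩
    · intro h0
      apply hF0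
      funext w
      exact congrFun h0 (Sum.inl w)
    · intro v
      simp only [Sum.elim_inl, Sum.elim_inr]
      rw [subdiv_aux_sum_edge_ite Γ v
        (fun s => (∑ u : V, if u ∈ s then F u else 0) / (2 * (1 - lam)))]
      rw [Finset.sum_congr rfl (fun w hw => by
        rw [subdiv_aux_sum_pair F (Γ.ne_of_adj ((by simpa using hw : Γ.Adj v w)))]
        : ∀ w ∈ Γ.neighborFinset v, (∑ u : V, if u ∈ s(v, w) then F u else 0) / (2 * (1 - lam))
          = (F v + F w) / (2 * (1 - lam)))]
      rw [← Finset.sum_div, Finset.sum_add_distrib, Finset.sum_const,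
        SimpleGraph.card_neighborFinset_eq_degree, nsmul_eq_mul]
      have h := hF v
      have h4 : (1 / (Γ.degree v : ℂ)) * ∑ w ∈ Γ.neighborFinset v, F w
          = (1 - 2 * lam * (2 - lam)) * F v := by linear_combination -h
      have hNval : (∑ w ∈ Γ.neighborFinset v, F w)
          = (1 - 2 * lam * (2 - lam)) * ((Γ.degree v : ℂ) * F v) := by
        calc (∑ w ∈ Γ.neighborFinset v, F w)
            = (Γ.degree v : ℂ) * ((1 / (Γ.degree v : ℂ))
                * ∑ w ∈ Γ.neighborFinset v, F w) := by
              rw [one_div, mul_inv_cancel_left₀ (hd v)]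
          _ = _ := by rw [h4]; ring
      rw [hNval]
      field_simp [hd v]
      ring
    · intro e
      simp only [Sum.elim_inl, Sum.elim_inr]
      field_simp
      ring
end
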